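/- The MPW solution is the unique solution for TUX games satisfying efficiency (∑_{i∈N} φ_i(w) = w(N,∅) for all w on N) and balanced contributions (φ_i(w) − φ_i(w_{−j}) = φ_j(w) − φ_j(w_{−i}) for all w on N and i,j ∈ N), where restrictions are taken with the operator r*. -/

import Mathlib

open Finset BigOperators

namespace TUX

/-- A (raw) game in partition function form: assigns a real worth to each
coalition together with a partition (of the outside players). -/
abbrev Game := Finset ℕ → Finset (Finset ℕ) → ℝ

/-- A TU game (characteristic function). -/
abbrev TUGame := Finset ℕ → ℝ

/-- A solution for TUX games: given a player set and a game, assigns payoffs. -/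
abbrev Sol := Finset ℕ → Game → ℕ → ℝ

/-- `w` is a genuine TUX game: the empty coalition has worth 0. -/
def IsTUX (w : Game) : Prop := ∀ π, w ∅ π = 0

/-- `π` is a partition of the finite set `M`. -/
def IsPartition (M : Finset ℕ) (π : Finset (Finset ℕ)) : Prop :=
  (∀ B ∈ π, B ⊆ M) ∧ ∅ ∉ π ∧ ∀ x ∈ M, (π.filter (fun B => x ∈ B)).card = 1

instance (M : Finset ℕ) : DecidablePred (IsPartition M) := fun π => by
  unfold IsPartition; infer_instance

/-- The finite set of all partitions of `M`. -/
def partitionsOf (M : Finset ℕ) : Finset (Finset (Finset ℕ)) :=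
  (M.powerset.powerset).filter (IsPartition M)

/-- The Ewens(θ = 1) probability of the partition `π` of `M`:
`p*_M(π) = ∏_{B ∈ π} (|B| - 1)! / |M|!`. -/
noncomputable def pstar (M : Finset ℕ) (π : Finset (Finset ℕ)) : ℝ :=
  (∏ B ∈ π, ((B.card - 1).factorial : ℝ)) / (M.card.factorial : ℝ)

/-- The block of `π` containing `j` (junk if `π` is not a partition containing `j`). -/
def blockOf (π : Finset (Finset ℕ)) (j : ℕ) : Finset ℕ :=
  (π.filter (fun B => j ∈ B)).sup id

/-- Add player `i` to the block `B` of `π`. -/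
def addToBlock (π : Finset (Finset ℕ)) (i : ℕ) (B : Finset ℕ) : Finset (Finset ℕ) :=
  insert (insert i B) (π.erase B)

/-- The restriction operator `r⋆` removing a single player `i` from a game on `N`:
`w₋ᵢ(S,π) = (1/(n-s)) (w(S, π₊ᵢ⇝∅) + ∑_{j ∈ N∖(S∪{i})} w(S, π₊ᵢ⇝π(j)))`. -/
noncomputable def restrict1 (N : Finset ℕ) (w : Game) (i : ℕ) : Game :=
  fun S π =>
    ((N.card : ℝ) - (S.card : ℝ))⁻¹ *
      (w S (insert {i} π) + ∑ j ∈ (N \ S).erase i, w S (addToBlock π i (blockOf π j)))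

/-- Iterated removal of a list of players. -/
noncomputable def restrictL : Finset ℕ → Game → List ℕ → Game
  | _, w, [] => w
  | N, w, i :: l => restrictL (N.erase i) (restrict1 N w i) l

/-- Removal of a set of players (via the increasing enumeration; by path
independence of `r⋆` the order is immaterial). -/
noncomputable def restrictSet (N : Finset ℕ) (w : Game) (T : Finset ℕ) : Game :=
  restrictL N w (T.sort (· ≤ ·))

/-- The average TU game `v̄_w` of a TUX game `w` on `N`. -/
noncomputable def avg (N : Finset ℕ) (w : Game) : TUGame :=
  fun S => ∑ π ∈ partitionsOf (N \ S), pstar (N \ S) π * w S π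

/-- The auxiliary TU game `v*_w(S) = w₋(N∖S)(S,∅)`. -/
noncomputable def auxGame (N : Finset ℕ) (w : Game) : TUGame :=
  fun S => restrictSet N w (N \ S) S ∅

/-- The Shapley value of a TU game on player set `N`. -/
noncomputable def shapley (N : Finset ℕ) (v : TUGame) (i : ℕ) : ℝ :=
  ∑ S ∈ (N.erase i).powerset,
    (((S.card.factorial : ℝ) * ((N.card - S.card - 1).factorial : ℝ)) / (N.card.factorial : ℝ)) *
      (v (insert i S) - v S)

/-- The MPW solution: the Shapley value of the average game. -/
noncomputable def MPW (N : Finset ℕ) (w : Game) (i : ℕ) : ℝ := shapley N (avg N w) i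

/-- The MPW solution as a solution for TUX games. -/
noncomputable def MPWsol : Sol := fun N w i => MPW N w i

/-- The scaled Dirac TUX game `δ_{T,τ}` on `N`. -/
noncomputable def scaledDirac (N T : Finset ℕ) (τ : Finset (Finset ℕ)) : Game :=
  fun S π => if S = T ∧ π = τ then (pstar (N \ T) τ)⁻¹ else 0

/-- `τ₋S`: remove the players of `S` from each block of `τ`, discarding empty blocks. -/
def partRemove (τ : Finset (Finset ℕ)) (S : Finset ℕ) : Finset (Finset ℕ) :=
  (τ.image (fun B => B \ S)).erase ∅

/-- The Sobolev-reduced TUX game `w₋ⱼ^{So,φ}` on `N ∖ {j}`. -/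
noncomputable def sobRed (N : Finset ℕ) (φ : Sol) (w : Game) (j : ℕ) : Game :=
  fun S π =>
    ((S.card : ℝ) / ((N.card : ℝ) - 1)) * (w (insert j S) π - φ N w j) +
      (1 - (S.card : ℝ) / ((N.card : ℝ) - 1)) * restrict1 N w j S π

/-- The Hart–Mas-Colell reduced TUX game `w₋T^{HM,φ}` on `N ∖ T`. -/
noncomputable def hmRed (N : Finset ℕ) (φ : Sol) (w : Game) (T : Finset ℕ) : Game :=
  fun S π => w (S ∪ T) π - ∑ j ∈ T, φ (S ∪ T) (restrictSet N w (N \ (S ∪ T))) j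

/-- Efficiency for TUX games. -/
def EfficientX (φ : Sol) : Prop :=
  ∀ (N : Finset ℕ) (w : Game), IsTUX w → ∑ i ∈ N, φ N w i = w N ∅

/-- Balanced contributions for TUX games (w.r.t. the restriction operator `r⋆`). -/
def BalancedContributionsX (φ : Sol) : Prop :=
  ∀ (N : Finset ℕ) (w : Game), IsTUX w → ∀ i ∈ N, ∀ j ∈ N,
    φ N w i - φ (N.erase j) (restrict1 N w j) i
      = φ N w j - φ (N.erase i) (restrict1 N w i) j

/-- 2-standardness for TUX games. -/
def TwoStandardX (φ : Sol) : Prop :=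
  ∀ i j : ℕ, i ≠ j → ∀ w : Game, IsTUX w →
    φ {i, j} w i
      = w {i} {({j} : Finset ℕ)}
        + (w {i, j} ∅ - w {j} {({i} : Finset ℕ)} - w {i} {({j} : Finset ℕ)}) / 2

/-- Sobolev consistency for TUX games. -/
def SobolevConsistentX (φ : Sol) : Prop :=
  ∀ (N : Finset ℕ) (w : Game), IsTUX w → ∀ i ∈ N, ∀ j ∈ N, i ≠ j →
    φ N w i = φ (N.erase j) (sobRed N φ w j) i

/-- Hart–Mas-Colell consistency (single-player removal) for TUX games. -/
def HMConsistentX (φ : Sol) : Prop :=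
  ∀ (N : Finset ℕ) (w : Game), IsTUX w → ∀ i ∈ N, ∀ j ∈ N, i ≠ j →
    φ N w i = φ (N.erase j) (hmRed N φ w {j}) i

/-- Set Hart–Mas-Colell consistency (removal of a coalition) for TUX games. -/
def SetHMConsistentX (φ : Sol) : Prop :=
  ∀ (N : Finset ℕ) (w : Game), IsTUX w → ∀ i ∈ N, ∀ T ⊆ N.erase i,
    φ N w i = φ (N \ T) (hmRed N φ w T) i

/-- The finite set of embedded coalitions `(T,τ)` of `N` with `T ≠ ∅`. -/
def embeddedNE (N : Finset ℕ) : Finset (Finset ℕ × Finset (Finset ℕ)) :=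
  (N.powerset ×ˢ N.powerset.powerset).filter
    (fun p => p.1.Nonempty ∧ IsPartition (N \ p.1) p.2)

end TUX
namespace TUX

lemma mem_partitionsOf {M : Finset ℕ} {σ : Finset (Finset ℕ)} :
    σ ∈ partitionsOf M ↔ IsPartition M σ := by
  simp only [partitionsOf, mem_filter, mem_powerset, and_iff_right_iff_imp]
  intro h
  intro B hB
  simpa using h.1 B hB

lemma IsPartition.block_eq {M : Finset ℕ} {π : Finset (Finset ℕ)}
    (hπ : IsPartition M π) {B B' : Finset ℕ} (hB : B ∈ π) (hB' : B' ∈ π)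
    {x : ℕ} (hx : x ∈ B) (hx' : x ∈ B') : B = B' := by
  have hxM : x ∈ M := hπ.1 B hB hx
  obtain ⟨C, hC⟩ := Finset.card_eq_one.1 (hπ.2.2 x hxM)
  have h1 : B ∈ π.filter (fun B => x ∈ B) := Finset.mem_filter.2 ⟨hB, hx⟩
  have h2 : B' ∈ π.filter (fun B => x ∈ B) := Finset.mem_filter.2 ⟨hB', hx'⟩
  rw [hC, Finset.mem_singleton] at h1 h2
  rw [h1, h2]

lemma IsPartition.filter_eq {M : Finset ℕ} {π : Finset (Finset ℕ)}
    (hπ : IsPartition M π) {B : Finset ℕ} (hB : B ∈ π) {x : ℕ} (hx : x ∈ B) :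
    π.filter (fun B => x ∈ B) = {B} := by
  apply Finset.eq_singleton_iff_unique_mem.2
  refine ⟨Finset.mem_filter.2 ⟨hB, hx⟩, ?_⟩
  intro C hC
  rw [Finset.mem_filter] at hC
  exact hπ.block_eq hC.1 hB hC.2 hx

lemma IsPartition.blockOf_eq {M : Finset ℕ} {π : Finset (Finset ℕ)}
    (hπ : IsPartition M π) {B : Finset ℕ} (hB : B ∈ π) {x : ℕ} (hx : x ∈ B) :
    blockOf π x = B := by
  rw [blockOf, hπ.filter_eq hB hx]
  simp

lemma IsPartition.exists_block {M : Finset ℕ} {π : Finset (Finset ℕ)}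
    (hπ : IsPartition M π) {x : ℕ} (hx : x ∈ M) : ∃ B ∈ π, x ∈ B := by
  obtain ⟨C, hC⟩ := Finset.card_eq_one.1 (hπ.2.2 x hx)
  have : C ∈ π.filter (fun B => x ∈ B) := by rw [hC]; simp
  rw [Finset.mem_filter] at this
  exact ⟨C, this.1, this.2⟩

lemma IsPartition.biUnion_eq {M : Finset ℕ} {π : Finset (Finset ℕ)}
    (hπ : IsPartition M π) : π.biUnion id = M := by
  ext x
  simp only [Finset.mem_biUnion, id]
  constructor
  · rintro ⟨B, hB, hx⟩; exact hπ.1 B hB hx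
  · exact fun hx => hπ.exists_block hx

lemma IsPartition.sum_blockOf {M : Finset ℕ} {π : Finset (Finset ℕ)}
    (hπ : IsPartition M π) (f : Finset ℕ → ℝ) :
    ∑ j ∈ M, f (blockOf π j) = ∑ B ∈ π, (B.card : ℝ) * f B := by
  rw [← hπ.biUnion_eq, Finset.sum_biUnion]
  · apply Finset.sum_congr rfl
    intro B hB
    show ∑ j ∈ B, f (blockOf π j) = _
    rw [Finset.sum_congr rfl (fun j hj => by rw [hπ.blockOf_eq hB hj])]
    simp [mul_comm]
  · intro B hB B' hB' hne
    simp only [Finset.mem_coe] at hB hB'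
    rw [Function.onFun, id, id, Finset.disjoint_left]
    intro x hx hx'
    exact hne (hπ.block_eq hB hB' hx hx')

lemma IsPartition.nonempty_of_mem {M : Finset ℕ} {π : Finset (Finset ℕ)}
    (hπ : IsPartition M π) {B : Finset ℕ} (hB : B ∈ π) : B.Nonempty := by
  rcases B.eq_empty_or_nonempty with h | h
  · exact absurd (h ▸ hB) hπ.2.1
  · exact h

end TUX
namespace TUX

lemma IsPartition.not_mem_block {M : Finset ℕ} {π : Finset (Finset ℕ)}
    (hπ : IsPartition M π) {i : ℕ} (hi : i ∉ M) {B : Finset ℕ} (hB : B ∈ π) : i ∉ B :=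
  fun h => hi (hπ.1 B hB h)

lemma IsPartition.singleton_not_mem {M : Finset ℕ} {π : Finset (Finset ℕ)}
    (hπ : IsPartition M π) {i : ℕ} (hi : i ∉ M) : ({i} : Finset ℕ) ∉ π :=
  fun h => hπ.not_mem_block hi h (Finset.mem_singleton_self i)

lemma isPartition_insert_singleton {M : Finset ℕ} {π : Finset (Finset ℕ)}
    (hπ : IsPartition M π) {i : ℕ} (hi : i ∉ M) :
    IsPartition (insert i M) (insert {i} π) := by
  refine ⟨?_, ?_, ?_⟩
  · intro B hB
    rcases Finset.mem_insert.1 hB with h | h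
    · subst h; simp
    · exact (hπ.1 B h).trans (Finset.subset_insert i M)
  · intro h
    rcases Finset.mem_insert.1 h with h | h
    · exact (Finset.singleton_ne_empty i) h.symm
    · exact hπ.2.1 h
  · intro x hx
    rcases Finset.mem_insert.1 hx with h | h
    · subst h
      rw [Finset.filter_insert, if_pos (Finset.mem_singleton_self x)]
      rw [Finset.filter_eq_empty_iff.2 (fun B hB => hπ.not_mem_block hi hB)]
      simp
    · have hxi : x ≠ i := fun e => hi (e ▸ h)
      rw [Finset.filter_insert, if_neg (by simpa using hxi)]
      exact hπ.2.2 x h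

lemma addToBlock_not_mem_iff {π : Finset (Finset ℕ)} {i : ℕ} {B : Finset ℕ}
    (hiB : i ∉ B) : i ∈ insert i B := Finset.mem_insert_self i B

lemma insert_block_not_mem {M : Finset ℕ} {π : Finset (Finset ℕ)}
    (hπ : IsPartition M π) {i : ℕ} (hi : i ∉ M) {B : Finset ℕ} (hB : B ∈ π) :
    insert i B ∉ π.erase B :=
  fun h => hπ.not_mem_block hi (Finset.mem_of_mem_erase h) (Finset.mem_insert_self i B)

lemma isPartition_addToBlock {M : Finset ℕ} {π : Finset (Finset ℕ)}
    (hπ : IsPartition M π) {i : ℕ} (hi : i ∉ M) {B : Finset ℕ} (hB : B ∈ π) :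
    IsPartition (insert i M) (addToBlock π i B) := by
  have hBM : B ⊆ M := hπ.1 B hB
  refine ⟨?_, ?_, ?_⟩
  · intro C hC
    rcases Finset.mem_insert.1 hC with h | h
    · subst h; exact Finset.insert_subset_insert i hBM
    · exact (hπ.1 C (Finset.mem_of_mem_erase h)).trans (Finset.subset_insert i M)
  · intro h
    rcases Finset.mem_insert.1 h with h | h
    · exact absurd h.symm (Finset.insert_ne_empty i B)
    · exact hπ.2.1 (Finset.mem_of_mem_erase h)
  · intro x hx
    rcases Finset.mem_insert.1 hx with h | h
    · subst h
      rw [addToBlock, Finset.filter_insert, if_pos (Finset.mem_insert_self x B)]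
      rw [Finset.filter_eq_empty_iff.2
        (fun C hC => hπ.not_mem_block hi (Finset.mem_of_mem_erase hC))]
      simp
    · have hxi : x ≠ i := fun e => hi (e ▸ h)
      by_cases hxB : x ∈ B
      · rw [addToBlock, Finset.filter_insert, if_pos (Finset.mem_insert_of_mem hxB),
          Finset.filter_erase, hπ.filter_eq hB hxB]
        simp
      · rw [addToBlock, Finset.filter_insert,
          if_neg (by simp [hxi, hxB]), Finset.filter_erase]
        obtain ⟨D, hD⟩ := Finset.card_eq_one.1 (hπ.2.2 x h)
        rw [hD]
        have hDB : D ≠ B := by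
          intro e
          have : D ∈ π.filter (fun C => x ∈ C) := by rw [hD]; simp
          exact hxB (e ▸ (Finset.mem_filter.1 this).2)
        rw [Finset.erase_eq_of_notMem (by simpa using hDB.symm)]
        simp

lemma singleton_not_mem_addToBlock {M : Finset ℕ} {π : Finset (Finset ℕ)}
    (hπ : IsPartition M π) {i : ℕ} (hi : i ∉ M) {B : Finset ℕ} (hB : B ∈ π) :
    ({i} : Finset ℕ) ∉ addToBlock π i B := by
  intro h
  rcases Finset.mem_insert.1 h with h | h
  · obtain ⟨x, hx⟩ := hπ.nonempty_of_mem hB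
    have hxM : x ∈ M := hπ.1 B hB hx
    have : x ∈ ({i} : Finset ℕ) := h ▸ Finset.mem_insert_of_mem hx
    exact hi ((Finset.mem_singleton.1 this) ▸ hxM)
  · exact hπ.singleton_not_mem hi (Finset.mem_of_mem_erase h)

/-- Decomposition of a partition of `insert i M` where `i` is not a singleton. -/
def delPart (σ : Finset (Finset ℕ)) (i : ℕ) : Finset (Finset ℕ) :=
  insert ((blockOf σ i).erase i) (σ.erase (blockOf σ i))

end TUX
namespace TUX

section Decomp

variable {M : Finset ℕ} {i : ℕ} {σ : Finset (Finset ℕ)}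

lemma erase_singleton_isPartition (hσ : IsPartition (insert i M) σ) (hi : i ∉ M)
    (hmem : ({i} : Finset ℕ) ∈ σ) : IsPartition M (σ.erase {i}) := by
  have hblk : ∀ B ∈ σ.erase {i}, i ∉ B := by
    intro B hB hiB
    exact (Finset.ne_of_mem_erase hB)
      (hσ.block_eq (Finset.mem_of_mem_erase hB) hmem hiB (Finset.mem_singleton_self i))
  refine ⟨?_, ?_, ?_⟩
  · intro B hB x hx
    have : x ∈ insert i M := hσ.1 B (Finset.mem_of_mem_erase hB) hx
    rcases Finset.mem_insert.1 this with h | h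
    · exact absurd (h ▸ hx) (hblk B hB)
    · exact h
  · exact fun h => hσ.2.1 (Finset.mem_of_mem_erase h)
  · intro x hx
    have hxi : x ≠ i := fun e => hi (e ▸ hx)
    rw [Finset.filter_erase, Finset.erase_eq_of_notMem
      (show ({i} : Finset ℕ) ∉ σ.filter (fun B => x ∈ B) from
        fun h => hxi (Finset.mem_singleton.1 (Finset.mem_filter.1 h).2))]
    exact hσ.2.2 x (Finset.mem_insert_of_mem hx)

variable (hσ : IsPartition (insert i M) σ) (hi : i ∉ M)
    (hns : ({i} : Finset ℕ) ∉ σ)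

include hσ in
lemma blockOf_self_mem : blockOf σ i ∈ σ ∧ i ∈ blockOf σ i := by
  obtain ⟨C, hC, hiC⟩ := hσ.exists_block (Finset.mem_insert_self i M)
  rw [hσ.blockOf_eq hC hiC]
  exact ⟨hC, hiC⟩

include hσ hi hns in
lemma blockOf_erase_nonempty : ((blockOf σ i).erase i).Nonempty := by
  obtain ⟨hC, hiC⟩ := blockOf_self_mem hσ
  rw [Finset.nonempty_iff_ne_empty]
  intro h
  apply hns
  have : blockOf σ i = {i} := by
    apply Finset.eq_singleton_iff_unique_mem.2
    refine ⟨hiC, fun x hx => ?_⟩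
    by_contra hxi
    exact absurd (Finset.mem_erase.2 ⟨hxi, hx⟩) (by rw [h]; simp)
  exact this ▸ hC

include hσ in
lemma blockOf_erase_not_mem : (blockOf σ i).erase i ∉ σ := by
  obtain ⟨hC, hiC⟩ := blockOf_self_mem hσ
  intro h
  rcases ((blockOf σ i).erase i).eq_empty_or_nonempty with he | ⟨x, hx⟩
  · exact hσ.2.1 (he ▸ h)
  · have := hσ.block_eq h hC (hx) (Finset.mem_of_mem_erase hx)
    exact (Finset.notMem_erase i _) (this ▸ hiC)

include hσ hi hns in
lemma delPart_isPartition : IsPartition M (delPart σ i) := by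
  obtain ⟨hC, hiC⟩ := blockOf_self_mem hσ
  set C := blockOf σ i with hCdef
  have hblk : ∀ B ∈ σ.erase C, i ∉ B := by
    intro B hB hiB
    exact (Finset.ne_of_mem_erase hB) (hσ.block_eq (Finset.mem_of_mem_erase hB) hC hiB hiC)
  refine ⟨?_, ?_, ?_⟩
  · intro B hB x hx
    rcases Finset.mem_insert.1 hB with h | h
    · subst h
      have : x ∈ insert i M := hσ.1 C hC (Finset.mem_of_mem_erase hx)
      rcases Finset.mem_insert.1 this with h | h
      · exact absurd h (Finset.mem_erase.1 hx).1
      · exact h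
    · have : x ∈ insert i M := hσ.1 B (Finset.mem_of_mem_erase h) hx
      rcases Finset.mem_insert.1 this with h' | h'
      · exact absurd (h' ▸ hx) (hblk B h)
      · exact h'
  · intro h
    rcases Finset.mem_insert.1 h with h | h
    · exact (Finset.nonempty_iff_ne_empty.1 (blockOf_erase_nonempty hσ hi hns)) h.symm
    · exact hσ.2.1 (Finset.mem_of_mem_erase h)
  · intro x hx
    have hxi : x ≠ i := fun e => hi (e ▸ hx)
    by_cases hxC : x ∈ C
    · rw [delPart, Finset.filter_insert, if_pos (Finset.mem_erase.2 ⟨hxi, hxC⟩),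
        Finset.filter_erase, hσ.filter_eq hC hxC]
      rw [← hCdef]
      simp
    · rw [delPart, Finset.filter_insert, if_neg (fun h => hxC (Finset.mem_of_mem_erase h)),
        Finset.filter_erase]
      obtain ⟨D, hD⟩ := Finset.card_eq_one.1 (hσ.2.2 x (Finset.mem_insert_of_mem hx))
      have hDC : D ≠ C := by
        intro e
        have : D ∈ σ.filter (fun B => x ∈ B) := by rw [hD]; simp
        exact hxC (e ▸ (Finset.mem_filter.1 this).2)
      rw [hD, Finset.erase_eq_of_notMem (by simpa using hDC.symm)]
      simp

include hσ in
lemma addToBlock_delPart : addToBlock (delPart σ i) i ((blockOf σ i).erase i) = σ := by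
  obtain ⟨hC, hiC⟩ := blockOf_self_mem hσ
  rw [addToBlock, delPart,
    Finset.erase_insert (fun h => blockOf_erase_not_mem hσ (Finset.mem_of_mem_erase h)),
    Finset.insert_erase hiC, Finset.insert_erase hC]

end Decomp

section Recover

variable {M : Finset ℕ} {π : Finset (Finset ℕ)} {i : ℕ} {B : Finset ℕ}
variable (hπ : IsPartition M π) (hi : i ∉ M) (hB : B ∈ π)

include hπ hi hB in
lemma blockOf_addToBlock : blockOf (addToBlock π i B) i = insert i B :=
  (isPartition_addToBlock hπ hi hB).blockOf_eq (Finset.mem_insert_self _ _)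
    (Finset.mem_insert_self i B)

include hπ hi hB in
lemma delPart_addToBlock : delPart (addToBlock π i B) i = π := by
  rw [delPart, blockOf_addToBlock hπ hi hB, addToBlock,
    Finset.erase_insert (insert_block_not_mem hπ hi hB),
    Finset.erase_insert (hπ.not_mem_block hi hB), Finset.insert_erase hB]

end Recover

/-- Key bijection: partitions of `insert i M` correspond to a partition of `M`
together with a choice of where to put `i`. -/
lemma sum_partitionsOf_insert {M : Finset ℕ} {i : ℕ} (hi : i ∉ M)
    (g : Finset (Finset ℕ) → ℝ) :
    ∑ σ ∈ partitionsOf (insert i M), g σ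
      = ∑ π ∈ partitionsOf M, g (insert {i} π)
        + ∑ p ∈ (partitionsOf M).sigma (fun π => π), g (addToBlock p.1 i p.2) := by
  rw [← Finset.sum_filter_add_sum_filter_not (partitionsOf (insert i M))
    (fun σ => ({i} : Finset ℕ) ∈ σ)]
  congr 1
  · refine Finset.sum_nbij' (fun σ => σ.erase {i}) (fun π => insert {i} π) ?_ ?_ ?_ ?_ ?_
    · intro σ hσ
      rw [Finset.mem_filter, mem_partitionsOf] at hσ
      exact mem_partitionsOf.2 (erase_singleton_isPartition hσ.1 hi hσ.2)
    · intro π hπ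
      rw [mem_partitionsOf] at hπ
      rw [Finset.mem_filter, mem_partitionsOf]
      exact ⟨isPartition_insert_singleton hπ hi, Finset.mem_insert_self _ _⟩
    · intro σ hσ
      exact Finset.insert_erase (Finset.mem_filter.1 hσ).2
    · intro π hπ
      exact Finset.erase_insert ((mem_partitionsOf.1 hπ).singleton_not_mem hi)
    · intro σ hσ
      rw [Finset.insert_erase (Finset.mem_filter.1 hσ).2]
  · refine Finset.sum_nbij'
      (fun σ => (⟨delPart σ i, (blockOf σ i).erase i⟩ : Σ _ : Finset (Finset ℕ), Finset ℕ))
      (fun p => addToBlock p.1 i p.2) ?_ ?_ ?_ ?_ ?_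
    · intro σ hσ
      rw [Finset.mem_filter, mem_partitionsOf] at hσ
      rw [Finset.mem_sigma, mem_partitionsOf]
      exact ⟨delPart_isPartition hσ.1 hi hσ.2, Finset.mem_insert_self _ _⟩
    · intro p hp
      rw [Finset.mem_sigma, mem_partitionsOf] at hp
      rw [Finset.mem_filter, mem_partitionsOf]
      exact ⟨isPartition_addToBlock hp.1 hi hp.2,
        singleton_not_mem_addToBlock hp.1 hi hp.2⟩
    · intro σ hσ
      rw [Finset.mem_filter, mem_partitionsOf] at hσ
      exact addToBlock_delPart hσ.1
    · intro p hp
      rw [Finset.mem_sigma, mem_partitionsOf] at hp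
      refine Sigma.ext ?_ (heq_of_eq ?_)
      · exact delPart_addToBlock hp.1 hi hp.2
      · show (blockOf (addToBlock p.1 i p.2) i).erase i = p.2
        rw [blockOf_addToBlock hp.1 hi hp.2,
          Finset.erase_insert ((mem_partitionsOf.1 (mem_partitionsOf.2 hp.1)).not_mem_block hi hp.2)]
    · intro σ hσ
      rw [Finset.mem_filter, mem_partitionsOf] at hσ
      rw [addToBlock_delPart hσ.1]

end TUX
namespace TUX

lemma factorial_pos_real (n : ℕ) : (0 : ℝ) < (n.factorial : ℝ) := by
  exact_mod_cast n.factorial_pos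

lemma pstar_insert_singleton {M : Finset ℕ} {π : Finset (Finset ℕ)}
    (hπ : IsPartition M π) {i : ℕ} (hi : i ∉ M) :
    pstar (insert i M) (insert {i} π) = pstar M π / ((M.card : ℝ) + 1) := by
  rw [pstar, pstar, Finset.prod_insert (hπ.singleton_not_mem hi),
    Finset.card_insert_of_notMem hi, Nat.factorial_succ]
  simp only [Finset.card_singleton, Nat.sub_self, Nat.factorial_zero, Nat.cast_one, one_mul]
  push_cast
  rw [div_div, mul_comm ((M.card : ℝ) + 1)]

lemma pstar_addToBlock {M : Finset ℕ} {π : Finset (Finset ℕ)}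
    (hπ : IsPartition M π) {i : ℕ} (hi : i ∉ M) {B : Finset ℕ} (hB : B ∈ π) :
    pstar (insert i M) (addToBlock π i B)
      = (B.card : ℝ) * pstar M π / ((M.card : ℝ) + 1) := by
  have hiB : i ∉ B := hπ.not_mem_block hi hB
  have hBpos : 1 ≤ B.card := Finset.card_pos.2 (hπ.nonempty_of_mem hB)
  obtain ⟨b, hb⟩ : ∃ b, B.card = b + 1 := ⟨B.card - 1, (Nat.succ_pred_eq_of_pos hBpos).symm⟩
  have hfac : ((insert i B).card - 1).factorial = B.card * (B.card - 1).factorial := by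
    rw [Finset.card_insert_of_notMem hiB, Nat.add_sub_cancel, hb]
    simp [Nat.factorial_succ]
  rw [pstar, pstar, addToBlock, Finset.prod_insert (insert_block_not_mem hπ hi hB),
    hfac, ← Finset.mul_prod_erase π _ hB, Finset.card_insert_of_notMem hi,
    Nat.factorial_succ]
  have h1 := factorial_pos_real M.card
  push_cast
  field_simp

/-- Chinese-restaurant-process style identity for Ewens(1) weights. -/
lemma crp {M : Finset ℕ} {i : ℕ} (hi : i ∉ M) (f : Finset (Finset ℕ) → ℝ) :
    ∑ σ ∈ partitionsOf (insert i M), pstar (insert i M) σ * f σ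
      = ((M.card : ℝ) + 1)⁻¹ *
        ∑ π ∈ partitionsOf M, pstar M π *
          (f (insert {i} π) + ∑ j ∈ M, f (addToBlock π i (blockOf π j))) := by
  rw [sum_partitionsOf_insert hi, Finset.sum_sigma, ← Finset.sum_add_distrib,
    Finset.mul_sum]
  apply Finset.sum_congr rfl
  intro π hπm
  have hπ := mem_partitionsOf.1 hπm
  rw [hπ.sum_blockOf (fun B => f (addToBlock π i B)), pstar_insert_singleton hπ hi,
    Finset.sum_congr rfl (fun B hBm => by
      rw [pstar_addToBlock hπ hi hBm] :
        ∀ B ∈ π, pstar (insert i M) (addToBlock π i B) * f (addToBlock π i B)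
          = (B.card : ℝ) * pstar M π / ((M.card : ℝ) + 1) * f (addToBlock π i B))]
  simp only [mul_add, Finset.mul_sum]
  congr 1
  · ring
  · exact Finset.sum_congr rfl (fun B _ => by ring)

/-- The average game commutes with the restriction operator. -/
lemma avg_restrict1 {N : Finset ℕ} (w : Game) {j : ℕ} (hj : j ∈ N) {S : Finset ℕ}
    (hS : S ⊆ N) (hjS : j ∉ S) :
    avg (N.erase j) (restrict1 N w j) S = avg N w S := by
  set M : Finset ℕ := (N.erase j) \ S with hM
  have hMalt : (N \ S).erase j = M := by
    ext x; simp only [hM, Finset.mem_sdiff, Finset.mem_erase]; tauto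
  have hjM : j ∉ M := by simp [hM]
  have hjNS : j ∈ N \ S := Finset.mem_sdiff.2 ⟨hj, hjS⟩
  have hins : insert j M = N \ S := by
    rw [← hMalt, Finset.insert_erase hjNS]
  have hcard : (N \ S).card = M.card + 1 := by
    rw [← hins, Finset.card_insert_of_notMem hjM]
  have hcast : (N.card : ℝ) - (S.card : ℝ) = (M.card : ℝ) + 1 := by
    have h1 : (N \ S).card = N.card - S.card := Finset.card_sdiff_of_subset hS
    have h2 : S.card ≤ N.card := Finset.card_le_card hS
    have : (M.card : ℝ) + 1 = ((N \ S).card : ℝ) := by exact_mod_cast hcard.symm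
    rw [this, h1]
    push_cast [h2]
    ring
  show (∑ π ∈ partitionsOf ((N.erase j) \ S), pstar ((N.erase j) \ S) π
      * restrict1 N w j S π) = avg N w S
  rw [← hM]
  have hrw : ∀ π ∈ partitionsOf M, pstar M π * restrict1 N w j S π
      = ((M.card : ℝ) + 1)⁻¹ * (pstar M π *
          (w S (insert {j} π) + ∑ k ∈ M, w S (addToBlock π j (blockOf π k)))) := by
    intro π _
    rw [restrict1, hcast, hMalt]
    ring
  rw [Finset.sum_congr rfl hrw, ← Finset.mul_sum, ← crp hjM (w S), hins, avg]

end TUX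
namespace TUX

/-- The Hart–Mas-Colell potential of a TU game. -/
noncomputable def pot (N : Finset ℕ) (v : TUGame) : ℝ :=
  ∑ S ∈ N.powerset,
    (((S.card - 1).factorial : ℝ) * ((N.card - S.card).factorial : ℝ))
      / (N.card.factorial : ℝ) * v S

lemma shapley_eq_pot_sub {N : Finset ℕ} {v : TUGame} (hv : v ∅ = 0) {i : ℕ}
    (hi : i ∈ N) : shapley N v i = pot N v - pot (N.erase i) v := by
  set E := N.erase i with hE
  have hiE : i ∉ E := Finset.notMem_erase i N
  have hNE : N = insert i E := (Finset.insert_erase hi).symm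
  have hcard : N.card = E.card + 1 := by
    rw [hNE, Finset.card_insert_of_notMem hiE]
  have hpotN : pot N v
      = ∑ S ∈ E.powerset,
          (((S.card - 1).factorial : ℝ) * ((N.card - S.card).factorial : ℝ))
            / (N.card.factorial : ℝ) * v S
        + ∑ T ∈ E.powerset,
          ((((insert i T).card - 1).factorial : ℝ)
              * ((N.card - (insert i T).card).factorial : ℝ))
            / (N.card.factorial : ℝ) * v (insert i T) := by
    rw [pot, show N.powerset = (insert i E).powerset from by rw [← hNE]]
    exact Finset.sum_powerset_insert hiE _
  rw [hpotN, pot, shapley,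
    show ∀ a b c : ℝ, a + b - c = b - (c - a) from fun a b c => by ring]
  rw [← Finset.sum_sub_distrib]
  rw [← Finset.sum_sub_distrib]
  · apply Finset.sum_congr rfl
    intro S hS
    have hSE : S ⊆ E := Finset.mem_powerset.1 hS
    have hiS : i ∉ S := fun h => hiE (hSE h)
    have hsle : S.card ≤ E.card := Finset.card_le_card hSE
    have hc1 : (insert i S).card = S.card + 1 := Finset.card_insert_of_notMem hiS
    rw [mul_sub]
    congr 1
    · -- coefficient of v (insert i S)
      have c1 : (insert i S).card - 1 = S.card := by omega
      have c2 : N.card - (insert i S).card = N.card - S.card - 1 := by omega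
      rw [c1, c2]
    · -- coefficient of v S
      rcases S.eq_empty_or_nonempty with rfl | hSne
      · simp [hv]
      · have hspos : 1 ≤ S.card := Finset.card_pos.2 hSne
        have e1 : N.card - S.card = (E.card - S.card) + 1 := by omega
        have e2 : N.card - S.card - 1 = E.card - S.card := by omega
        have e3 : (S.card).factorial = S.card * (S.card - 1).factorial := by
          conv_lhs => rw [show S.card = (S.card - 1) + 1 by omega]
          rw [Nat.factorial_succ]
          congr 1
          omega
        have e4 : (N.card).factorial = (E.card + 1) * (E.card).factorial := by
          rw [hcard, Nat.factorial_succ]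
        rw [e2, e1, e3, e4, Nat.factorial_succ]
        have p1 := factorial_pos_real E.card
        have q1 : ((E.card.factorial : ℝ)) ≠ 0 := ne_of_gt p1
        have q2 : ((E.card : ℝ) + 1) ≠ 0 := Nat.cast_add_one_ne_zero E.card
        push_cast
        field_simp
        rw [Nat.cast_sub hsle]
        ring

lemma shapley_efficient {N : Finset ℕ} (hN : N.Nonempty) {v : TUGame} (hv : v ∅ = 0) :
    ∑ i ∈ N, shapley N v i = v N := by
  have hnpos : 1 ≤ N.card := Finset.card_pos.2 hN
  obtain ⟨e, he⟩ : ∃ e, N.card = e + 1 := ⟨N.card - 1, (Nat.succ_pred_eq_of_pos hnpos).symm⟩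
  have hstep : ∀ i ∈ N, shapley N v i = pot N v - pot (N.erase i) v :=
    fun i hi => shapley_eq_pot_sub hv hi
  rw [Finset.sum_congr rfl hstep, Finset.sum_sub_distrib, Finset.sum_const, nsmul_eq_mul]
  have herase : ∀ i ∈ N, pot (N.erase i) v
      = ∑ S ∈ N.powerset, (if i ∈ S then 0 else
          (((S.card - 1).factorial : ℝ) * ((N.card - 1 - S.card).factorial : ℝ))
            / ((N.card - 1).factorial : ℝ) * v S) := by
    intro i hi
    rw [pot, Finset.card_erase_of_mem hi]
    rw [show (N.erase i).powerset = N.powerset.filter (fun S => i ∉ S) from by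
      ext S; simp [Finset.subset_erase]]
    rw [Finset.sum_filter]
    apply Finset.sum_congr rfl
    intro S _
    by_cases h : i ∈ S <;> simp [h]
  rw [Finset.sum_congr rfl herase, Finset.sum_comm]
  have hsplit : ∀ S ∈ N.powerset,
      ∑ i ∈ N, (if i ∈ S then 0 else
          (((S.card - 1).factorial : ℝ) * ((N.card - 1 - S.card).factorial : ℝ))
            / ((N.card - 1).factorial : ℝ) * v S)
      = ((N.card - S.card : ℕ) : ℝ) *
          ((((S.card - 1).factorial : ℝ) * ((N.card - 1 - S.card).factorial : ℝ))
            / ((N.card - 1).factorial : ℝ) * v S) := by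
    intro S hS
    rw [Finset.sum_ite, Finset.sum_const, Finset.sum_const, smul_zero, zero_add,
      nsmul_eq_mul]
    congr 2
    rw [← Finset.sdiff_eq_filter, Finset.card_sdiff_of_subset (Finset.mem_powerset.1 hS)]
  rw [Finset.sum_congr rfl hsplit, pot, Finset.mul_sum, ← Finset.sum_sub_distrib]
  have hkey : ∀ S ∈ N.powerset,
      (N.card : ℝ) * ((((S.card - 1).factorial : ℝ) * ((N.card - S.card).factorial : ℝ))
          / (N.card.factorial : ℝ) * v S)
        - ((N.card - S.card : ℕ) : ℝ) *
            ((((S.card - 1).factorial : ℝ) * ((N.card - 1 - S.card).factorial : ℝ))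
              / ((N.card - 1).factorial : ℝ) * v S)
      = if S = N then v N else 0 := by
    intro S hS
    have hSN : S ⊆ N := Finset.mem_powerset.1 hS
    by_cases heq : S = N
    · subst heq
      rw [if_pos rfl, Nat.sub_self]
      simp only [Nat.cast_zero, zero_mul, sub_zero, Nat.factorial_zero, Nat.cast_one, mul_one]
      have e3 : (S.card).factorial = S.card * (S.card - 1).factorial := by
        rw [he]; simp [Nat.factorial_succ]
      rw [e3]
      have p2 := factorial_pos_real (S.card - 1)
      have hcpos : (0:ℝ) < (S.card : ℝ) := by exact_mod_cast hnpos
      push_cast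
      field_simp
    · rw [if_neg heq]
      have hslt : S.card < N.card := Finset.card_lt_card (hSN.ssubset_of_ne heq)
      have hsle : S.card ≤ e := by omega
      have e1 : N.card - S.card = (e - S.card) + 1 := by omega
      have e2 : N.card - 1 - S.card = e - S.card := by omega
      have e4 : (N.card).factorial = (e + 1) * (e).factorial := by
        rw [he, Nat.factorial_succ]
      have e5 : N.card - 1 = e := by omega
      rw [e1, e2, e4, e5, Nat.factorial_succ, he]
      have p1 := factorial_pos_real e
      have p2 := factorial_pos_real (S.card - 1)
      have p3 := factorial_pos_real (e - S.card)
      push_cast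
      rw [sub_eq_zero]
      field_simp
  rw [Finset.sum_congr rfl hkey, Finset.sum_ite_eq' N.powerset N (fun _ => v N),
    if_pos (Finset.mem_powerset_self N)]

end TUX
namespace TUX

lemma restrict1_isTUX {N : Finset ℕ} {w : Game} (hw : IsTUX w) (i : ℕ) :
    IsTUX (restrict1 N w i) := by
  intro π
  rw [restrict1]
  simp [hw _]

lemma avg_empty {N : Finset ℕ} {w : Game} (hw : IsTUX w) : avg N w ∅ = 0 := by
  rw [avg]
  simp [hw _]

lemma partitionsOf_empty : partitionsOf (∅ : Finset ℕ) = {∅} := by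
  ext σ
  rw [mem_partitionsOf, Finset.mem_singleton]
  constructor
  · intro h
    rcases σ.eq_empty_or_nonempty with h' | ⟨B, hB⟩
    · exact h'
    · have hBe : B = ∅ := Finset.subset_empty.1 (h.1 B hB)
      exact absurd (hBe ▸ hB) h.2.1
  · rintro rfl
    exact ⟨by simp, by simp, by simp⟩

lemma avg_self {N : Finset ℕ} (w : Game) : avg N w N = w N ∅ := by
  rw [avg, Finset.sdiff_self, partitionsOf_empty, Finset.sum_singleton, pstar]
  simp

lemma MPW_efficient : EfficientX MPWsol := by
  intro N w hw
  rcases N.eq_empty_or_nonempty with rfl | hN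
  · simp [hw ∅]
  · calc ∑ i ∈ N, MPWsol N w i = avg N w N := shapley_efficient hN (avg_empty hw)
      _ = w N ∅ := avg_self w

lemma MPW_bc : BalancedContributionsX MPWsol := by
  intro N w hw i hi j hj
  by_cases hij : i = j
  · subst hij; rfl
  · have hvj : ∀ S ⊆ N.erase j, avg (N.erase j) (restrict1 N w j) S = avg N w S := by
      intro S hS
      obtain ⟨h1, h2⟩ := Finset.subset_erase.1 hS
      exact avg_restrict1 w hj h1 h2
    have hvi : ∀ S ⊆ N.erase i, avg (N.erase i) (restrict1 N w i) S = avg N w S := by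
      intro S hS
      obtain ⟨h1, h2⟩ := Finset.subset_erase.1 hS
      exact avg_restrict1 w hi h1 h2
    have hiNj : i ∈ N.erase j := Finset.mem_erase.2 ⟨hij, hi⟩
    have hjNi : j ∈ N.erase i := Finset.mem_erase.2 ⟨Ne.symm hij, hj⟩
    have hshap_j : shapley (N.erase j) (avg (N.erase j) (restrict1 N w j)) i
        = shapley (N.erase j) (avg N w) i := by
      rw [shapley, shapley]
      apply Finset.sum_congr rfl
      intro S hS
      have hS' : S ⊆ (N.erase j).erase i := Finset.mem_powerset.1 hS
      have h1 : S ⊆ N.erase j := hS'.trans (Finset.erase_subset _ _)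
      have h2 : insert i S ⊆ N.erase j := Finset.insert_subset hiNj h1
      rw [hvj _ h1, hvj _ h2]
    have hshap_i : shapley (N.erase i) (avg (N.erase i) (restrict1 N w i)) j
        = shapley (N.erase i) (avg N w) j := by
      rw [shapley, shapley]
      apply Finset.sum_congr rfl
      intro S hS
      have hS' : S ⊆ (N.erase i).erase j := Finset.mem_powerset.1 hS
      have h1 : S ⊆ N.erase i := hS'.trans (Finset.erase_subset _ _)
      have h2 : insert j S ⊆ N.erase i := Finset.insert_subset hjNi h1
      rw [hvi _ h1, hvi _ h2]
    have hv0 : avg N w ∅ = 0 := avg_empty hw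
    show MPW N w i - MPW (N.erase j) (restrict1 N w j) i
        = MPW N w j - MPW (N.erase i) (restrict1 N w i) j
    rw [MPW, MPW, MPW, MPW, hshap_j, hshap_i,
      shapley_eq_pot_sub hv0 hi, shapley_eq_pot_sub hv0 hj,
      shapley_eq_pot_sub hv0 hiNj, shapley_eq_pot_sub hv0 hjNi,
      Finset.erase_right_comm]
    ring

lemma unique_aux {φ ψ : Sol} (hφe : EfficientX φ) (hφb : BalancedContributionsX φ)
    (hψe : EfficientX ψ) (hψb : BalancedContributionsX ψ) :
    ∀ (N : Finset ℕ) (w : Game), IsTUX w → ∀ i ∈ N, φ N w i = ψ N w i := by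
  intro N
  induction N using Finset.strongInduction with
  | _ N ih =>
    intro w hw i hi
    have key : ∀ j ∈ N, φ N w i - ψ N w i = φ N w j - ψ N w j := by
      intro j hj
      by_cases hij : i = j
      · subst hij; rfl
      · have h1 := hφb N w hw i hi j hj
        have h2 := hψb N w hw i hi j hj
        have h3 : φ (N.erase j) (restrict1 N w j) i = ψ (N.erase j) (restrict1 N w j) i :=
          ih (N.erase j) (Finset.erase_ssubset hj) _ (restrict1_isTUX hw j) i
            (Finset.mem_erase.2 ⟨hij, hi⟩)
        have h4 : φ (N.erase i) (restrict1 N w i) j = ψ (N.erase i) (restrict1 N w i) j :=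
          ih (N.erase i) (Finset.erase_ssubset hi) _ (restrict1_isTUX hw i) j
            (Finset.mem_erase.2 ⟨Ne.symm hij, hj⟩)
        linarith
    have h5 : ∑ j ∈ N, (φ N w j - ψ N w j) = 0 := by
      rw [Finset.sum_sub_distrib, hφe N w hw, hψe N w hw, sub_self]
    have hsum : (N.card : ℝ) * (φ N w i - ψ N w i) = 0 := by
      calc (N.card : ℝ) * (φ N w i - ψ N w i)
          = ∑ _j ∈ N, (φ N w i - ψ N w i) := by rw [Finset.sum_const, nsmul_eq_mul]
        _ = ∑ j ∈ N, (φ N w j - ψ N w j) := Finset.sum_congr rfl key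
        _ = 0 := h5
    have hpos : (0 : ℝ) < (N.card : ℝ) := by
      exact_mod_cast Finset.card_pos.2 ⟨i, hi⟩
    have := (mul_eq_zero.1 hsum).resolve_left (ne_of_gt hpos)
    linarith

end TUX
open TUX in
/-- The MPW solution is the unique solution for TUX games
satisfying efficiency and balanced contributions. -/
theorem MPW_unique_EF_BC :
    (EfficientX MPWsol ∧ BalancedContributionsX MPWsol) ∧
      ∀ φ : Sol, EfficientX φ → BalancedContributionsX φ →
        ∀ (N : Finset ℕ) (w : Game), IsTUX w → ∀ i ∈ N, φ N w i = MPWsol N w i :=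
  ⟨⟨MPW_efficient, MPW_bc⟩,
    fun φ hφe hφb N w hw i hi =>
      unique_aux hφe hφb MPW_efficient MPW_bc N w hw i hi⟩
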